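/- (Per-step guarantee in the proof of Theorem 2.) Let T : S → A → S be a shared transition function and R_i : S → A → ℝ, i ∈ I, reward functions forming a family of deterministic MDPs with shared transitions, let D be a probability mass function on I, let H ≥ 1, and let the policy π* : S → A be α-optimal everywhere. Fix a state s ∈ S, h < H, and real numbers Q̄_a for a ∈ A such that: (i) |Q̄_a − E_{i~D}[R_i(s,a) + V*_i(h, T(s,a))]| ≤ β + ε/(2H) for every a ∈ A; (ii) Q̄_{π*(s)} ≥ Q̄_a − α − β for every a ∈ A. Then every â ∈ A attaining the maximum of a ↦ Q̄_a over A satisfies E_{i~D}[R_i(s,â) + V_i(π*, h, T(s,â))] ≥ E_{i~D}[V_i(π*, h+1, s)] − ε/H − 2α − 3β. -/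
import Mathlib


open scoped BigOperators

/-- The `h`-step value of a stationary deterministic policy `π` in the deterministic MDP
with transition function `T` and reward function `R`. -/
noncomputable def detVal {S A : Type*} (T : S → A → S) (R : S → A → ℝ)
    (π : S → A) : ℕ → S → ℝ
  | 0, _ => 0
  | h + 1, s => R s (π s) + detVal T R π h (T s (π s))

/-- The `h`-step optimal value in the deterministic MDP `(T, R)`. -/
noncomputable def detOptVal {S A : Type*} [Fintype A] [Nonempty A]
    (T : S → A → S) (R : S → A → ℝ) : ℕ → S → ℝ
  | 0, _ => 0
  | h + 1, s => ⨆ a : A, (R s a + detOptVal T R h (T s a))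

/-- Expectation of `f : I → ℝ` under the probability mass function `D` on the finite type
`I`: `E_{i~D}[f(i)] = Σ_i D(i)·f(i)`. -/
noncomputable def expectD {I : Type*} [Fintype I] (D : PMF I) (f : I → ℝ) : ℝ :=
  ∑ i : I, (D i).toReal * f i

lemma detVal_le_detOptVal {S A : Type*} [Fintype A] [Nonempty A]
    (T : S → A → S) (R : S → A → ℝ) (π : S → A) :
    ∀ h s, detVal T R π h s ≤ detOptVal T R h s := by
  intro h
  induction h with
  | zero => intro s; simp [detVal, detOptVal]
  | succ n ih =>
    intro s
    have h1 : R s (π s) + detVal T R π n (T s (π s)) ≤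
        R s (π s) + detOptVal T R n (T s (π s)) := by
      have := ih (T s (π s)); linarith
    have h2 : R s (π s) + detOptVal T R n (T s (π s)) ≤
        ⨆ a : A, (R s a + detOptVal T R n (T s a)) :=
      le_ciSup (Finite.bddAbove_range (fun a : A => R s a + detOptVal T R n (T s a))) (π s)
    calc detVal T R π (n+1) s = R s (π s) + detVal T R π n (T s (π s)) := rfl
      _ ≤ _ := le_trans h1 h2

lemma expectD_sum_one {I : Type*} [Fintype I] (D : PMF I) :
    ∑ i : I, (D i).toReal = 1 := by
  have h := D.tsum_coe
  rw [tsum_fintype] at h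
  have : (∑ i : I, D i).toReal = 1 := by rw [h]; simp
  rw [← this, ENNReal.toReal_sum]
  intro i _
  exact D.apply_ne_top i

lemma expectD_mono {I : Type*} [Fintype I] (D : PMF I) {f g : I → ℝ}
    (hfg : ∀ i, f i ≤ g i) : expectD D f ≤ expectD D g := by
  apply Finset.sum_le_sum
  intro i _
  exact mul_le_mul_of_nonneg_left (hfg i) ENNReal.toReal_nonneg

lemma expectD_add_const {I : Type*} [Fintype I] (D : PMF I) (f : I → ℝ) (c : ℝ) :
    expectD D (fun i => f i + c) = expectD D f + c := by
  simp only [expectD, mul_add, Finset.sum_add_distrib, ← Finset.sum_mul,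
    expectD_sum_one D, one_mul]

/-- **Per-step guarantee in the proof of Theorem 2.**  If the estimates `Q̄_a` are within
`β + ε/(2H)` of the expected optimal Q-values and `Q̄_{π*(s)} ≥ Q̄_a − α − β` for all `a`,
then any maximizer `â` of `Q̄` satisfies
`E[R_i(s,â) + V_i(π*, h, T(s,â))] ≥ E[V_i(π*, h+1, s)] − ε/H − 2α − 3β`. -/
theorem per_step_guarantee
    {S A I : Type*} [Fintype S] [Nonempty S] [Fintype A] [Nonempty A] [Fintype I]
    (T : S → A → S) (R : I → S → A → ℝ)
    (D : PMF I)
    (H : ℕ) (hH : 1 ≤ H)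
    (α β : ℝ) (hα : 0 ≤ α) (hβ : 0 ≤ β) (ε : ℝ) (hε : 0 < ε)
    (πstar : S → A)
    (hopt : ∀ i : I, ∀ s : S, ∀ h : ℕ, h ≤ H →
      detVal T (R i) πstar h s ≥ detOptVal T (R i) h s - α)
    (s : S) (h : ℕ) (hh : h < H)
    (Qbar : A → ℝ)
    (hQacc : ∀ a : A,
      |Qbar a - expectD D (fun i => R i s a + detOptVal T (R i) h (T s a))| ≤
        β + ε / (2 * H))
    (hQstar : ∀ a : A, Qbar (πstar s) ≥ Qbar a - α - β) :
    ∀ ahat : A, (∀ a : A, Qbar a ≤ Qbar ahat) →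
      expectD D (fun i => R i s ahat + detVal T (R i) πstar h (T s ahat)) ≥
        expectD D (fun i => detVal T (R i) πstar (h + 1) s) -
          ε / H - 2 * α - 3 * β := by
  intro ahat hmax
  set Qs : A → ℝ := fun a => expectD D (fun i => R i s a + detOptVal T (R i) h (T s a))
    with hQs
  have hhH : h ≤ H := le_of_lt hh
  -- Step 1: LHS ≥ Qs ahat - α
  have step1 : expectD D (fun i => R i s ahat + detVal T (R i) πstar h (T s ahat)) ≥
      Qs ahat - α := by
    have hmono : expectD D (fun i => (R i s ahat + detOptVal T (R i) h (T s ahat)) + (-α)) ≤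
        expectD D (fun i => R i s ahat + detVal T (R i) πstar h (T s ahat)) := by
      apply expectD_mono
      intro i
      have := hopt i (T s ahat) h hhH
      linarith
    rw [expectD_add_const] at hmono
    simpa [hQs] using hmono
  -- Step 2: Qs ahat ≥ Qs (πstar s) - 2β - ε/H
  have hacc1 := abs_le.mp (hQacc ahat)
  have hacc2 := abs_le.mp (hQacc (πstar s))
  have hmaxx := hmax (πstar s)
  have hHpos : (0:ℝ) < (H:ℝ) := by exact_mod_cast lt_of_lt_of_le one_pos hH
  have heps : ε / (2 * H) + ε / (2 * H) = ε / H := by field_simp; ring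
  have step2 : Qs ahat ≥ Qs (πstar s) - 2 * β - ε / H := by
    have h1 : Qs ahat ≥ Qbar ahat - (β + ε / (2 * H)) := by
      have := hacc1.2; simp only [hQs]; linarith
    have h2 : Qbar (πstar s) ≥ Qs (πstar s) - (β + ε / (2 * H)) := by
      have := hacc2.1; simp only [hQs] at *; linarith
    linarith
  -- Step 3: Qs (πstar s) ≥ E[Vπ(h+1,s)]
  have step3 : Qs (πstar s) ≥ expectD D (fun i => detVal T (R i) πstar (h + 1) s) := by
    apply expectD_mono
    intro i
    have := detVal_le_detOptVal T (R i) πstar h (T s (πstar s))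
    show R i s (πstar s) + detVal T (R i) πstar h (T s (πstar s)) ≤ _
    linarith
  linarith
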